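/- Let H be a complex Hilbert space, A : D(A) ⊆ H → H skew-selfadjoint, and for s ∈ [0,1[ let M_s, N_s : H → H be bounded linear operators with M_s selfadjoint, satisfying ρM_s + Re N_s ≥ c > 0 for some fixed ρ > 0 and all s ∈ [0,1[. If M_s → M₀ and N_s → N₀ strongly on H as s → 0+, then for every F ∈ D(∂₀) ⊆ H_ρ(ℝ,H) one has (closure(∂₀M_s + N_s + A))⁻¹ F → (closure(∂₀M₀ + N₀ + A))⁻¹ F in H_ρ(ℝ,H) as s → 0+. -/

import Mathlib

/-!
STATEMENT 13: If `ρ M_s + Re N_s ≥ c > 0` for all `s ∈ [0,1[` and `M_s → M₀`, `N_s → N₀`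
strongly as `s → 0+`, then for every `F ∈ D(∂₀) ⊆ H_ρ(ℝ,H)`:
`(closure(∂₀M_s+N_s+A))⁻¹ F → (closure(∂₀M₀+N₀+A))⁻¹ F` in `H_ρ(ℝ,H)` as `s → 0+`.
-/

noncomputable section
open MeasureTheory Filter Topology Set

/-- The exponentially weighted Lebesgue measure `exp(-2ρt) dt` on `ℝ`. -/
def wMeasure (ρ : ℝ) : Measure ℝ :=
  volume.withDensity fun t => ENNReal.ofReal (Real.exp (-2 * ρ * t))

/-- The weighted space `H_ρ(ℝ,H)`. -/
abbrev Hw (H : Type*) [NormedAddCommGroup H] (ρ : ℝ) : Type _ := Lp H 2 (wMeasure ρ)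

variable {H : Type*} [NormedAddCommGroup H] [InnerProductSpace ℂ H] [CompleteSpace H]

/-- `D` is `∂₀`, i.e. the closure in `H_ρ(ℝ,H)` of differentiation on `C¹` compactly
supported functions: its graph is the closure of the graph of the classical
derivative on `C¹` compactly supported functions. -/
def IsTimeDeriv (ρ : ℝ) (D : Hw H ρ →ₗ.[ℂ] Hw H ρ) : Prop :=
  (D.graph : Set (Hw H ρ × Hw H ρ)) = closure
    {p : Hw H ρ × Hw H ρ | ∃ g : ℝ → H, ContDiff ℝ 1 g ∧ HasCompactSupport g ∧
      ⇑p.1 =ᵐ[wMeasure ρ] g ∧ ⇑p.2 =ᵐ[wMeasure ρ] deriv g}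

/-- `Al` is the pointwise lift to `H_ρ(ℝ,H)` of the (possibly unbounded) operator `A`
on `H`: its domain is `{u : u(t) ∈ D(A) a.e. and (t ↦ A u(t)) ∈ H_ρ(ℝ,H)}` and it acts
as `(Al u)(t) = A (u(t))`. -/
def IsPointwiseLift (ρ : ℝ) (A : H →ₗ.[ℂ] H) (Al : Hw H ρ →ₗ.[ℂ] Hw H ρ) : Prop :=
  ∀ u v : Hw H ρ, (u, v) ∈ Al.graph ↔
    ∀ᵐ t ∂(wMeasure ρ), ∃ h : u t ∈ A.domain, A ⟨u t, h⟩ = v t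

/-- A densely defined closed operator `A` is skew-selfadjoint if `A* = -A`. -/
def IsSkewSelfAdjointP (A : H →ₗ.[ℂ] H) : Prop :=
  Dense (A.domain : Set H) ∧ A.IsClosed ∧ A.adjoint = -A

/-- The real part `(1/2)(M + M*)` of a bounded operator. -/
def reOp (M : H →L[ℂ] H) : H →L[ℂ] H := (2 : ℂ)⁻¹ • (M + ContinuousLinearMap.adjoint M)

/-- The pointwise (in time) lift of a bounded operator on `H` to `H_ρ(ℝ,H)`. -/
def liftL (ρ : ℝ) (M : H →L[ℂ] H) : Hw H ρ →L[ℂ] Hw H ρ :=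
  ContinuousLinearMap.compLpL 2 (wMeasure ρ) M

/-- The operator `∂₀M₀ + M₁ + A` with domain `D(∂₀) ∩ D(A)` in `H_ρ(ℝ,H)`,
where `D` plays the role of `∂₀` and `Al` the role of (the lift of) `A`. -/
def evo (ρ : ℝ) (M0 M1 : H →L[ℂ] H) (D Al : Hw H ρ →ₗ.[ℂ] Hw H ρ) :
    Hw H ρ →ₗ.[ℂ] Hw H ρ :=
  ((liftL ρ M1 : Hw H ρ →ₗ[ℂ] Hw H ρ)) +ᵥ
    ((⟨D.domain, ((liftL ρ M0 : Hw H ρ →ₗ[ℂ] Hw H ρ)).comp D.toFun⟩ : Hw H ρ →ₗ.[ℂ] Hw H ρ)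
      + Al)

/-- `S` is the everywhere defined continuous inverse of the operator `T`. -/
def IsInverseOf {E : Type*} [NormedAddCommGroup E] [NormedSpace ℂ E]
    (S : E →L[ℂ] E) (T : E →ₗ.[ℂ] E) : Prop :=
  (∀ f : E, (S f, f) ∈ T.graph) ∧ ∀ u : T.domain, S (T u) = u

/-- `χ` is the temporal cut-off operator, i.e. multiplication by the characteristic
function of the time interval `(-∞, a]`. -/
def IsCutoff (ρ a : ℝ) (χ : Hw H ρ →L[ℂ] Hw H ρ) : Prop :=
  ∀ u : Hw H ρ, ⇑(χ u) =ᵐ[wMeasure ρ] Set.indicator (Set.Iic a) ⇑u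


section AuxProofs
open scoped ENNReal NNReal
set_option linter.unusedSectionVars false

variable {H : Type*} [NormedAddCommGroup H] [InnerProductSpace ℂ H] [CompleteSpace H] {ρ : ℝ}

local notation "⟪" x ", " y "⟫" => @inner ℂ _ _ x y
local notation "w" => wMeasure ρ

lemma Hw_inner (f g : Hw H ρ) : ⟪f, g⟫ = ∫ t, ⟪f t, g t⟫ ∂w :=
  MeasureTheory.L2.inner_def f g

lemma Hw_re_inner (f g : Hw H ρ) : (⟪f, g⟫).re = ∫ t, (⟪f t, g t⟫).re ∂w := by
  rw [Hw_inner]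
  rw [← RCLike.re_to_complex, ← integral_re (MeasureTheory.L2.integrable_inner f g)]
  simp [RCLike.re_to_complex]

lemma Hw_integrable_re_inner (f g : Hw H ρ) :
    Integrable (fun t => (⟪f t, g t⟫).re) w := by
  have := (MeasureTheory.L2.integrable_inner (𝕜 := ℂ) f g).re
  simpa [RCLike.re_to_complex] using this

lemma Hw_norm_sq (f : Hw H ρ) : ‖f‖ ^ 2 = ∫ t, ‖f t‖ ^ 2 ∂w := by
  have h1 : (⟪f, f⟫).re = ‖f‖ ^ 2 := by
    rw [← RCLike.re_to_complex, inner_self_eq_norm_sq (𝕜 := ℂ)]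
  rw [← h1, Hw_re_inner]
  congr 1; ext t
  rw [← RCLike.re_to_complex, inner_self_eq_norm_sq (𝕜 := ℂ)]

lemma Hw_integrable_norm_sq (f : Hw H ρ) : Integrable (fun t => ‖f t‖ ^ 2) w := by
  have := Hw_integrable_re_inner f f
  refine this.congr (Eventually.of_forall fun t => ?_)
  simp only
  rw [← RCLike.re_to_complex, inner_self_eq_norm_sq (𝕜 := ℂ)]

lemma liftL_coe (M : H →L[ℂ] H) (u : Hw H ρ) :
    ⇑(liftL ρ M u) =ᵐ[w] fun t => M (u t) :=
  ContinuousLinearMap.coeFn_compLpL M u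

set_option linter.unusedSectionVars false

lemma tendsto_liftL_seq {P : ℕ → H →L[ℂ] H} {P0 : H →L[ℂ] H}
    (hP : ∀ x, Tendsto (fun n => P n x) atTop (𝓝 (P0 x))) (v : Hw H ρ) :
    Tendsto (fun n => liftL ρ (P n) v) atTop (𝓝 (liftL ρ P0 v)) := by
  -- uniform bound via Banach--Steinhaus
  obtain ⟨C, hC⟩ : ∃ C, ∀ n, ‖P n‖ ≤ C := by
    have h1 : ∀ x, ∃ C, ∀ n, ‖P n x‖ ≤ C := by
      intro x
      obtain ⟨C, hC⟩ := ((hP x).norm).bddAbove_range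
      exact ⟨C, fun n => hC ⟨n, rfl⟩⟩
    exact banach_steinhaus h1
  have hC0 : 0 ≤ C := le_trans (norm_nonneg _) (hC 0)
  -- the integrals of the squared norms tend to zero
  have key : Tendsto (fun n => ∫ t, ‖P n (v t) - P0 (v t)‖ ^ 2 ∂w) atTop (𝓝 0) := by
    have := tendsto_integral_of_dominated_convergence
      (F := fun n t => ‖P n (v t) - P0 (v t)‖ ^ 2)
      (f := fun _ => (0 : ℝ)) (μ := w)
      (bound := fun t => (C + ‖P0‖) ^ 2 * ‖v t‖ ^ 2)
      ?_ ?_ ?_ ?_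
    · simpa using this
    · intro n
      apply AEStronglyMeasurable.pow
      apply AEStronglyMeasurable.norm
      exact ((P n).continuous.comp_aestronglyMeasurable (Lp.aestronglyMeasurable v)).sub
        (P0.continuous.comp_aestronglyMeasurable (Lp.aestronglyMeasurable v))
    · exact (Hw_integrable_norm_sq v).const_mul _
    · intro n
      refine Eventually.of_forall fun t => ?_
      rw [Real.norm_of_nonneg (by positivity), ← mul_pow]
      apply pow_le_pow_left₀ (norm_nonneg _)
      calc ‖P n (v t) - P0 (v t)‖ ≤ ‖P n (v t)‖ + ‖P0 (v t)‖ := norm_sub_le _ _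
        _ ≤ ‖P n‖ * ‖v t‖ + ‖P0‖ * ‖v t‖ :=
            add_le_add ((P n).le_opNorm _) (P0.le_opNorm _)
        _ ≤ C * ‖v t‖ + ‖P0‖ * ‖v t‖ := by
            gcongr; exact hC n
        _ = (C + ‖P0‖) * ‖v t‖ := by ring
    · refine Eventually.of_forall fun t => ?_
      have : Tendsto (fun n => P n (v t) - P0 (v t)) atTop (𝓝 0) := by
        have := (hP (v t)).sub (tendsto_const_nhds (x := P0 (v t)))
        simpa using this
      simpa using ((this.norm).pow 2)
  -- conclude norm convergence
  rw [tendsto_iff_norm_sub_tendsto_zero]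
  have hsq : ∀ n, ‖liftL ρ (P n) v - liftL ρ P0 v‖ ^ 2
      = ∫ t, ‖P n (v t) - P0 (v t)‖ ^ 2 ∂w := by
    intro n
    rw [Hw_norm_sq]
    refine integral_congr_ae ?_
    filter_upwards [Lp.coeFn_sub (liftL ρ (P n) v) (liftL ρ P0 v),
      liftL_coe (P n) v, liftL_coe P0 v] with t h1 h2 h3
    rw [h1]; simp [h2, h3]
  have h2 : Tendsto (fun n => ‖liftL ρ (P n) v - liftL ρ P0 v‖ ^ 2) atTop (𝓝 0) := by
    simpa [hsq] using key
  have := (Real.continuous_sqrt.tendsto 0).comp h2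
  simp only [Function.comp_def, Real.sqrt_zero] at this
  refine this.congr fun n => ?_
  rw [Real.sqrt_sq (norm_nonneg _)]

lemma tendsto_liftL {P : ℝ → H →L[ℂ] H}
    (hP : ∀ x, Tendsto (fun s => P s x) (𝓝[>] (0:ℝ)) (𝓝 (P 0 x))) (v : Hw H ρ) :
    Tendsto (fun s => liftL ρ (P s) v) (𝓝[>] (0:ℝ)) (𝓝 (liftL ρ (P 0) v)) := by
  rw [tendsto_iff_seq_tendsto]
  intro x hx
  exact tendsto_liftL_seq (P := fun n => P (x n)) (P0 := P 0)
    (fun y => (hP y).comp hx) v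

lemma integral_wMeasure (f : ℝ → ℝ) :
    ∫ t, f t ∂w = ∫ t, Real.exp (-2*ρ*t) * f t := by
  rw [wMeasure]
  have hmeas : Measurable fun t : ℝ => (Real.exp (-2*ρ*t)).toNNReal :=
    (Real.measurable_exp.comp (by fun_prop)).real_toNNReal
  have : (fun t : ℝ => ENNReal.ofReal (Real.exp (-2 * ρ * t)))
      = fun t : ℝ => ((Real.exp (-2*ρ*t)).toNNReal : ℝ≥0∞) := rfl
  rw [this, integral_withDensity_eq_integral_smul hmeas f]
  congr 1; ext t
  rw [NNReal.smul_def, Real.coe_toNNReal _ (Real.exp_nonneg _), smul_eq_mul]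

lemma ibp_core (M : H →L[ℂ] H) (hM : IsSelfAdjoint M) {g : ℝ → H}
    (hg : ContDiff ℝ 1 g) (hsupp : HasCompactSupport g) :
    ∫ t, Real.exp (-2*ρ*t) * (⟪g t, M (deriv g t)⟫).re =
      ρ * ∫ t, Real.exp (-2*ρ*t) * (⟪g t, M (g t)⟫).re := by
  set r : ℝ → ℝ := fun t => (⟪g t, M (g t)⟫).re with hr_def
  set q : ℝ → ℝ := fun t => (⟪g t, M (deriv g t)⟫).re with hq_def
  set e : ℝ → ℝ := fun t => Real.exp (-2*ρ*t) with he_def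
  set φ : ℝ → ℝ := fun t => r t * e t with hφ_def
  set ψ : ℝ → ℝ := fun t => 2 * q t * e t + r t * ((-2*ρ) * e t) with hψ_def
  have hgd : ∀ t, HasDerivAt g (deriv g t) t := fun t =>
    ((hg.differentiable one_ne_zero) t).hasDerivAt
  have hMg : ∀ t, HasDerivAt (fun t => M (g t)) (M (deriv g t)) t := by
    intro t
    have := (M.restrictScalars ℝ).hasFDerivAt.comp_hasDerivAt t (hgd t)
    simpa [Function.comp_def] using this
  have hr : ∀ t, HasDerivAt r (2 * q t) t := by
    intro t
    have h1 : HasDerivAt (fun t => ⟪g t, M (g t)⟫)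
        (⟪g t, M (deriv g t)⟫ + ⟪deriv g t, M (g t)⟫) t :=
      HasDerivAt.inner ℂ (hgd t) (hMg t)
    have h2 := (Complex.reCLM.hasFDerivAt.comp_hasDerivAt t h1)
    have h3 : (⟪g t, M (deriv g t)⟫ + ⟪deriv g t, M (g t)⟫).re = 2 * q t := by
      have : ⟪deriv g t, M (g t)⟫ = starRingEnd ℂ ⟪g t, M (deriv g t)⟫ := by
        rw [← ContinuousLinearMap.adjoint_inner_left M, hM.adjoint_eq,
          inner_conj_symm]
      rw [Complex.add_re, this, Complex.conj_re]
      simp only [hq_def]; ring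
    have h4 : HasDerivAt r (Complex.reCLM (⟪g t, M (deriv g t)⟫ + ⟪deriv g t, M (g t)⟫)) t := h2
    simpa [h3] using h4
  have hexp : ∀ t, HasDerivAt e ((-2*ρ) * e t) t := by
    intro t
    have h1 : HasDerivAt (fun t : ℝ => -2*ρ*t) (-2*ρ) t := by
      simpa using (hasDerivAt_id t).const_mul (-2*ρ)
    simpa [he_def, mul_comm] using h1.exp
  have hφ : ∀ t, HasDerivAt φ (ψ t) t := fun t => (hr t).mul (hexp t)
  -- regularity of φ
  have hMC : ContDiff ℝ 1 fun t => M (g t) :=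
    ((M.restrictScalars ℝ).contDiff).comp hg
  have hrC : ContDiff ℝ 1 r :=
    (Complex.reCLM.contDiff).comp (ContDiff.inner ℂ hg hMC)
  have heC : ContDiff ℝ 1 e := (Real.contDiff_exp.comp (by fun_prop))
  have hφC : ContDiff ℝ 1 φ := hrC.mul heC
  have hφS : HasCompactSupport φ := by
    have hrS : HasCompactSupport r := by
      have : r = (fun x : H => (⟪x, M x⟫).re) ∘ g := rfl
      rw [this]
      exact hsupp.comp_left (by simp)
    exact hrS.mul_right
  have hderiv : deriv φ = ψ := funext fun t => (hφ t).deriv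
  -- integral of the derivative vanishes
  have hqC : Continuous q := by
    apply Complex.continuous_re.comp
    exact Continuous.inner (hg.continuous) (M.continuous.comp
      (hg.continuous_deriv le_rfl))
  have hψcont : Continuous ψ :=
    ((continuous_const.mul hqC).mul heC.continuous).add
      (hrC.continuous.mul (continuous_const.mul heC.continuous))
  have hψS : HasCompactSupport ψ := by
    rw [← hderiv]; exact hφS.deriv
  have hint : Integrable ψ volume := hψcont.integrable_of_hasCompactSupport hψS
  have hzero : ∫ t, ψ t = 0 := by
    have h1 := HasCompactSupport.integral_Iic_deriv_eq hφC hφS 0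
    have h2 := HasCompactSupport.integral_Ioi_deriv_eq hφC hφS 0
    have h3 := integral_add_compl (measurableSet_Iic (a := (0:ℝ)))
      (hderiv ▸ hint : Integrable (deriv φ) volume)
    rw [compl_Iic, h1, h2] at h3
    rw [← hderiv]
    rw [← h3]; ring
  -- split the integral
  have hqS : HasCompactSupport q := by
    refine hsupp.mono fun t ht => ?_
    intro hg0
    apply ht
    simp only [hq_def, hg0, inner_zero_left, Complex.zero_re]
  have hrS : HasCompactSupport r := by
    refine hsupp.mono fun t ht => ?_
    intro hg0
    apply ht
    simp only [hr_def, hg0, inner_zero_left, Complex.zero_re]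
  have hqe : Integrable (fun t => e t * q t) volume :=
    (heC.continuous.mul hqC).integrable_of_hasCompactSupport hqS.mul_left
  have hre : Integrable (fun t => e t * r t) volume :=
    (heC.continuous.mul hrC.continuous).integrable_of_hasCompactSupport hrS.mul_left
  have hsplit : (2:ℝ) * (∫ t, e t * q t) + (-(2 * ρ)) * (∫ t, e t * r t) = 0 := by
    rw [← integral_const_mul, ← integral_const_mul,
      ← integral_add (hqe.const_mul 2) (hre.const_mul _), ← hzero]
    congr 1; ext t; simp only [hψ_def]; ring
  have hfin : ∫ t, e t * q t = ρ * ∫ t, e t * r t := by linear_combination hsplit / 2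
  simpa [he_def, hq_def, hr_def] using hfin

lemma ibp_graph {D : Hw H ρ →ₗ.[ℂ] Hw H ρ} (hD : IsTimeDeriv ρ D) {M : H →L[ℂ] H}
    (hM : IsSelfAdjoint M) {u v : Hw H ρ} (h : (u, v) ∈ D.graph) :
    (⟪u, liftL ρ M v⟫).re = ρ * (⟪u, liftL ρ M u⟫).re := by
  have hcont : Continuous fun p : Hw H ρ × Hw H ρ =>
      (⟪p.1, liftL ρ M p.2⟫).re - ρ * (⟪p.1, liftL ρ M p.1⟫).re := by
    apply Continuous.sub
    · exact Complex.continuous_re.comp (continuous_inner.comp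
        (continuous_fst.prodMk ((liftL ρ M).continuous.comp continuous_snd)))
    · exact continuous_const.mul (Complex.continuous_re.comp (continuous_inner.comp
        (continuous_fst.prodMk ((liftL ρ M).continuous.comp continuous_fst))))
  have hclosed : IsClosed {p : Hw H ρ × Hw H ρ |
      (⟪p.1, liftL ρ M p.2⟫).re - ρ * (⟪p.1, liftL ρ M p.1⟫).re = 0} :=
    isClosed_eq hcont continuous_const
  rw [IsTimeDeriv] at hD
  have h' : ((u,v) : Hw H ρ × Hw H ρ) ∈ (D.graph : Set _) := h
  rw [hD] at h'
  have hsub : {p : Hw H ρ × Hw H ρ | ∃ g : ℝ → H, ContDiff ℝ 1 g ∧ HasCompactSupport g ∧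
      ⇑p.1 =ᵐ[wMeasure ρ] g ∧ ⇑p.2 =ᵐ[wMeasure ρ] deriv g} ⊆
      {p : Hw H ρ × Hw H ρ |
      (⟪p.1, liftL ρ M p.2⟫).re - ρ * (⟪p.1, liftL ρ M p.1⟫).re = 0} := by
    rintro ⟨a, b⟩ ⟨g, hg, hgs, h1, h2⟩
    simp only [Set.mem_setOf_eq] at *
    have e1 : (⟪a, liftL ρ M b⟫).re = ∫ t, Real.exp (-2*ρ*t) * (⟪g t, M (deriv g t)⟫).re := by
      rw [Hw_re_inner, ← integral_wMeasure]
      refine integral_congr_ae ?_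
      filter_upwards [h1, h2, liftL_coe M b] with t k1 k2 k3
      rw [k3]; show (⟪a t, M (b t)⟫).re = _; rw [k1, k2]
    have e2 : (⟪a, liftL ρ M a⟫).re = ∫ t, Real.exp (-2*ρ*t) * (⟪g t, M (g t)⟫).re := by
      rw [Hw_re_inner, ← integral_wMeasure]
      refine integral_congr_ae ?_
      filter_upwards [h1, liftL_coe M a] with t k1 k3
      rw [k3]; show (⟪a t, M (a t)⟫).re = _; rw [k1]
    rw [e1, e2, ibp_core M hM hg hgs, sub_self]
  have := closure_minimal hsub hclosed h'
  simpa [sub_eq_zero] using this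

lemma skew_re {A : H →ₗ.[ℂ] H} {Al : Hw H ρ →ₗ.[ℂ] Hw H ρ}
    (hA : IsSkewSelfAdjointP A) (hAl : IsPointwiseLift ρ A Al)
    {u v : Hw H ρ} (h : (u, v) ∈ Al.graph) : (⟪u, v⟫).re = 0 := by
  have hpt : ∀ x : A.domain, (⟪(x : H), A x⟫).re = 0 := by
    intro x
    have hd : Dense (A.domain : Set H) := hA.1
    have hfa := LinearPMap.adjoint_isFormalAdjoint hd
    rw [hA.2.2] at hfa
    have hx' : (x : H) ∈ (-A).domain := x.2
    have key := hfa ⟨(x : H), hx'⟩ x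
    rw [LinearPMap.neg_apply] at key
    have hxx : A ⟨(x : H), hx'⟩ = A x := rfl
    rw [hxx] at key
    have : ⟪(x:H), A x⟫ = - ⟪A x, (x:H)⟫ := by rw [← key]; simp
    rw [← inner_conj_symm (A x) (x:H)] at this
    have hre := congrArg Complex.re this
    simp only [Complex.neg_re, Complex.conj_re] at hre
    linarith
  have haev := (hAl u v).mp h
  have hz : (fun t => (⟪u t, v t⟫).re) =ᵐ[wMeasure ρ] (fun _ => (0:ℝ)) := by
    filter_upwards [haev] with t ht
    obtain ⟨hx, hax⟩ := ht
    show (⟪u t, v t⟫).re = 0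
    rw [← hax]
    exact hpt ⟨u t, hx⟩
  rw [Hw_re_inner, integral_congr_ae hz, integral_zero]

lemma evo_domain (M0 M1 : H →L[ℂ] H) (D Al : Hw H ρ →ₗ.[ℂ] Hw H ρ) :
    (evo ρ M0 M1 D Al).domain = D.domain ⊓ Al.domain := rfl

lemma evo_apply (M0 M1 : H →L[ℂ] H) (D Al : Hw H ρ →ₗ.[ℂ] Hw H ρ) {x : Hw H ρ}
    (hx : x ∈ D.domain ⊓ Al.domain) :
    evo ρ M0 M1 D Al ⟨x, hx⟩ =
      liftL ρ M1 x + (liftL ρ M0 (D ⟨x, hx.1⟩) + Al ⟨x, hx.2⟩) := rfl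

lemma hpos_pt {M N : H →L[ℂ] H} {c : ℝ}
    (h : ∀ x : H, c * ‖x‖ ^ 2 ≤ (inner ℂ x (((ρ : ℂ) • M + reOp N) x) : ℂ).re) (x : H) :
    c * ‖x‖ ^ 2 ≤ ρ * (⟪x, M x⟫).re + (⟪x, N x⟫).re := by
  have h0 := h x
  have hexp : (⟪x, ((ρ : ℂ) • M + reOp N) x⟫).re
      = ρ * (⟪x, M x⟫).re + (⟪x, N x⟫).re := by
    rw [ContinuousLinearMap.add_apply, inner_add_right,
      ContinuousLinearMap.smul_apply, inner_smul_right]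
    have h2 : (⟪x, reOp N x⟫) = ((⟪x, N x⟫).re : ℂ) := by
      rw [reOp, ContinuousLinearMap.smul_apply, inner_smul_right,
        ContinuousLinearMap.add_apply, inner_add_right,
        ContinuousLinearMap.adjoint_inner_right, ← inner_conj_symm x (N x)]
      rw [add_comm, Complex.add_conj, Complex.conj_re]
      push_cast
      ring
    rw [h2, Complex.add_re, Complex.ofReal_re]
    congr 1
    rw [Complex.re_ofReal_mul]
  rw [hexp] at h0
  exact h0

lemma evo_graph_est {A : H →ₗ.[ℂ] H} (hA : IsSkewSelfAdjointP A)
    {D Al : Hw H ρ →ₗ.[ℂ] Hw H ρ} (hD : IsTimeDeriv ρ D) (hAl : IsPointwiseLift ρ A Al)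
    {M N : H →L[ℂ] H} (hMsa : IsSelfAdjoint M) {c : ℝ}
    (hpos : ∀ x : H, c * ‖x‖ ^ 2 ≤ ρ * (⟪x, M x⟫).re + (⟪x, N x⟫).re)
    {p : Hw H ρ × Hw H ρ} (hp : p ∈ (evo ρ M N D Al).graph) :
    c * ‖p.1‖ ^ 2 ≤ (⟪p.1, p.2⟫).re := by
  rw [LinearPMap.mem_graph_iff] at hp
  obtain ⟨y, hy1, hy2⟩ := hp
  set u : Hw H ρ := (y : Hw H ρ) with hu
  have hyd : u ∈ D.domain ⊓ Al.domain := y.2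
  have happ : (evo ρ M N D Al) y
      = liftL ρ N u + (liftL ρ M (D ⟨u, hyd.1⟩) + Al ⟨u, hyd.2⟩) := by
    have : y = ⟨u, hyd⟩ := rfl
    rw [this, evo_apply]
  rw [← hy1, ← hy2, happ]
  rw [inner_add_right, inner_add_right, Complex.add_re, Complex.add_re]
  have hskew : (⟪u, Al ⟨u, hyd.2⟩⟫).re = 0 :=
    skew_re hA hAl (Al.mem_graph ⟨u, hyd.2⟩)
  have hibp : (⟪u, liftL ρ M (D ⟨u, hyd.1⟩)⟫).re = ρ * (⟪u, liftL ρ M u⟫).re :=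
    ibp_graph hD hMsa (D.mem_graph ⟨u, hyd.1⟩)
  rw [hskew, hibp, add_zero]
  -- now express as integrals
  have iN : Integrable (fun t => (⟪u t, N (u t)⟫).re) w := by
    refine (Hw_integrable_re_inner u (liftL ρ N u)).congr ?_
    filter_upwards [liftL_coe N u] with t k
    rw [k]
  have iM : Integrable (fun t => (⟪u t, M (u t)⟫).re) w := by
    refine (Hw_integrable_re_inner u (liftL ρ M u)).congr ?_
    filter_upwards [liftL_coe M u] with t k
    rw [k]
  have eN : (⟪u, liftL ρ N u⟫).re = ∫ t, (⟪u t, N (u t)⟫).re ∂w := by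
    rw [Hw_re_inner]
    refine integral_congr_ae ?_
    filter_upwards [liftL_coe N u] with t k
    rw [k]
  have eM : (⟪u, liftL ρ M u⟫).re = ∫ t, (⟪u t, M (u t)⟫).re ∂w := by
    rw [Hw_re_inner]
    refine integral_congr_ae ?_
    filter_upwards [liftL_coe M u] with t k
    rw [k]
  rw [eN, eM]
  have hsum : ∫ t, (⟪u t, N (u t)⟫).re ∂w + ρ * ∫ t, (⟪u t, M (u t)⟫).re ∂w
      = ∫ t, ((⟪u t, N (u t)⟫).re + ρ * (⟪u t, M (u t)⟫).re) ∂w := by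
    rw [← integral_const_mul, ← integral_add iN (iM.const_mul ρ)]
  rw [hsum]
  have hmono : ∫ t, c * ‖u t‖ ^ 2 ∂w
      ≤ ∫ t, ((⟪u t, N (u t)⟫).re + ρ * (⟪u t, M (u t)⟫).re) ∂w := by
    refine integral_mono_ae ((Hw_integrable_norm_sq u).const_mul c)
      (iN.add (iM.const_mul ρ)) ?_
    refine Eventually.of_forall fun t => ?_
    have := hpos (u t)
    simp only
    linarith
  calc c * ‖u‖ ^ 2 = ∫ t, c * ‖u t‖ ^ 2 ∂w := by rw [Hw_norm_sq, integral_const_mul]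
    _ ≤ _ := hmono

lemma closure_graph_subset (T : Hw H ρ →ₗ.[ℂ] Hw H ρ) :
    (T.closure.graph : Set (Hw H ρ × Hw H ρ)) ⊆ closure (T.graph : Set _) := by
  by_cases hT : T.IsClosable
  · rw [← hT.graph_closure_eq_closure_graph, Submodule.topologicalClosure_coe]
  · rw [T.closure_def' hT]
    exact subset_closure

lemma closure_graph_est {A : H →ₗ.[ℂ] H} (hA : IsSkewSelfAdjointP A)
    {D Al : Hw H ρ →ₗ.[ℂ] Hw H ρ} (hD : IsTimeDeriv ρ D) (hAl : IsPointwiseLift ρ A Al)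
    {M N : H →L[ℂ] H} (hMsa : IsSelfAdjoint M) {c : ℝ}
    (hpos : ∀ x : H, c * ‖x‖ ^ 2 ≤ ρ * (⟪x, M x⟫).re + (⟪x, N x⟫).re)
    {p : Hw H ρ × Hw H ρ} (hp : p ∈ (evo ρ M N D Al).closure.graph) :
    c * ‖p.1‖ ^ 2 ≤ (⟪p.1, p.2⟫).re := by
  have hsub := closure_graph_subset (evo ρ M N D Al)
  have hclosed : IsClosed {q : Hw H ρ × Hw H ρ | c * ‖q.1‖ ^ 2 ≤ (⟪q.1, q.2⟫).re} := by
    apply isClosed_le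
    · exact continuous_const.mul ((continuous_fst.norm).pow 2)
    · exact Complex.continuous_re.comp continuous_inner
  have hmem : (evo ρ M N D Al).graph ≤ {q : Hw H ρ × Hw H ρ | c * ‖q.1‖ ^ 2 ≤ (⟪q.1, q.2⟫).re} :=
    fun q hq => evo_graph_est hA hD hAl hMsa hpos hq
  exact closure_minimal hmem hclosed (hsub (SetLike.mem_coe.mpr hp))

lemma norm_le_of_est {c : ℝ} (hc : 0 < c) {u f : Hw H ρ}
    (h : c * ‖u‖ ^ 2 ≤ (⟪u, f⟫).re) : ‖u‖ ≤ c⁻¹ * ‖f‖ := by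
  have h2 : (⟪u, f⟫).re ≤ ‖u‖ * ‖f‖ := by
    have := re_inner_le_norm (𝕜 := ℂ) u f
    simpa [RCLike.re_to_complex] using this
  rcases eq_or_lt_of_le (norm_nonneg u) with h0 | h0
  · rw [← h0]; positivity
  · have h3 : c * ‖u‖ ≤ ‖f‖ := by nlinarith
    calc ‖u‖ = c⁻¹ * (c * ‖u‖) := by field_simp
      _ ≤ c⁻¹ * ‖f‖ := mul_le_mul_of_nonneg_left h3 (inv_nonneg.mpr hc.le)

set_option maxHeartbeats 1000000 in
theorem evo_solution_operators_converge_on_smooth'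
    (c : ℝ) (hρ : 0 < ρ) (hc : 0 < c)
    (A : H →ₗ.[ℂ] H) (hA : IsSkewSelfAdjointP A)
    (M N : ℝ → H →L[ℂ] H) (hMsa : ∀ s ∈ Set.Ico (0 : ℝ) 1, IsSelfAdjoint (M s))
    (hpos : ∀ s ∈ Set.Ico (0 : ℝ) 1, ∀ x : H,
      c * ‖x‖ ^ 2 ≤ (inner ℂ x (((ρ : ℂ) • M s + reOp (N s)) x) : ℂ).re)
    (hMconv : ∀ x : H, Filter.Tendsto (fun s => M s x) (nhdsWithin 0 (Set.Ioi 0)) (nhds (M 0 x)))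
    (hNconv : ∀ x : H, Filter.Tendsto (fun s => N s x) (nhdsWithin 0 (Set.Ioi 0)) (nhds (N 0 x)))
    (D Al : Hw H ρ →ₗ.[ℂ] Hw H ρ) (hD : IsTimeDeriv ρ D) (hAl : IsPointwiseLift ρ A Al)
    (S : ℝ → (Hw H ρ →L[ℂ] Hw H ρ))
    (hS : ∀ s ∈ Set.Ico (0 : ℝ) 1, IsInverseOf (S s) (evo ρ (M s) (N s) D Al).closure) :
    ∀ F : Hw H ρ,
      Filter.Tendsto (fun s => S s F) (nhdsWithin 0 (Set.Ioi 0)) (nhds (S 0 F)) := by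
  intro F
  have h01 : (0:ℝ) ∈ Set.Ico (0:ℝ) 1 := ⟨le_refl 0, by norm_num⟩
  have hpos' : ∀ s ∈ Set.Ico (0:ℝ) 1, ∀ x : H,
      c * ‖x‖ ^ 2 ≤ ρ * (⟪x, M s x⟫).re + (⟪x, N s x⟫).re := fun s hs =>
    hpos_pt (hpos s hs)
  have hbound : ∀ s ∈ Set.Ico (0:ℝ) 1, ∀ f : Hw H ρ, ‖S s f‖ ≤ c⁻¹ * ‖f‖ := by
    intro s hs f
    exact norm_le_of_est hc
      (closure_graph_est (M := M s) (N := N s) (p := (S s f, f)) hA hD hAl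
        (hMsa s hs) (hpos' s hs) ((hS s hs).1 f))
  rw [Metric.tendsto_nhds]
  intro ε hε
  -- density of the range of `T 0`
  have hdense : ∃ x : (evo ρ (M 0) (N 0) D Al).domain, ‖F - (evo ρ (M 0) (N 0) D Al) x‖ < c * ε / 4 := by
    have hmem : ((S 0 F, F) : Hw H ρ × Hw H ρ) ∈ closure ((evo ρ (M 0) (N 0) D Al).graph : Set _) :=
      closure_graph_subset _ (SetLike.mem_coe.mpr ((hS 0 h01).1 F))
    rw [Metric.mem_closure_iff] at hmem
    obtain ⟨q, hq, hqd⟩ := hmem (c * ε / 4) (by positivity)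
    rw [SetLike.mem_coe, LinearPMap.mem_graph_iff] at hq
    obtain ⟨y, hy1, hy2⟩ := hq
    refine ⟨y, ?_⟩
    rw [hy2]
    calc ‖F - q.2‖ = dist ((S 0 F, F) : Hw H ρ × Hw H ρ).2 q.2 := by
          rw [dist_eq_norm]
      _ ≤ dist ((S 0 F, F) : Hw H ρ × Hw H ρ) q := by
          rw [Prod.dist_eq]; exact le_max_right _ _
      _ < c * ε / 4 := hqd
  obtain ⟨x, hx⟩ := hdense
  set u : Hw H ρ := (x : Hw H ρ) with hu
  set f : Hw H ρ := (evo ρ (M 0) (N 0) D Al) x with hf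
  have hxd : u ∈ D.domain ⊓ Al.domain := x.2
  -- `S s` inverts `T s` on the common domain
  have hSsTu : ∀ s, s ∈ Set.Ico (0:ℝ) 1 → S s ((evo ρ (M s) (N s) D Al) ⟨u, hxd⟩) = u := by
    intro s hs
    have hxc : u ∈ (evo ρ (M s) (N s) D Al).closure.domain := ((evo ρ (M s) (N s) D Al).le_closure).1 hxd
    have heq : (evo ρ (M s) (N s) D Al) ⟨u, hxd⟩ = (evo ρ (M s) (N s) D Al).closure ⟨u, hxc⟩ := ((evo ρ (M s) (N s) D Al).le_closure).2 rfl
    rw [heq]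
    exact (hS s hs).2 ⟨u, hxc⟩
  have hxeq : x = ⟨u, hxd⟩ := rfl
  have hS0f : S 0 f = u := by
    rw [hf, hxeq]
    exact hSsTu 0 h01
  -- convergence of `T s u` to `T 0 u = f`
  have hconv : Tendsto (fun s => (evo ρ (M s) (N s) D Al) ⟨u, hxd⟩) (𝓝[>] (0:ℝ)) (𝓝 f) := by
    have hTs : ∀ s, (evo ρ (M s) (N s) D Al) ⟨u, hxd⟩
        = liftL ρ (N s) u + (liftL ρ (M s) (D ⟨u, hxd.1⟩) + Al ⟨u, hxd.2⟩) := by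
      intro s
      exact evo_apply (M s) (N s) D Al hxd
    have h1 := tendsto_liftL (P := N) hNconv u
    have h2 := tendsto_liftL (P := M) hMconv (D ⟨u, hxd.1⟩)
    have := h1.add (h2.add (tendsto_const_nhds (x := Al ⟨u, hxd.2⟩)))
    simp only [← hTs] at this
    have hf0 : f = (evo ρ (M 0) (N 0) D Al) ⟨u, hxd⟩ := by rw [hf, hxeq]
    rw [hf0]
    exact this
  have hev1 : ∀ᶠ s in 𝓝[>] (0:ℝ), ‖(evo ρ (M s) (N s) D Al) ⟨u, hxd⟩ - f‖ < c * ε / 4 := by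
    have := (Metric.tendsto_nhds.mp hconv) (c * ε / 4) (by positivity)
    filter_upwards [this] with s hs
    rwa [dist_eq_norm] at hs
  have hev2 : ∀ᶠ s in 𝓝[>] (0:ℝ), s ∈ Set.Ico (0:ℝ) 1 := by
    have hlt : ∀ᶠ s in 𝓝 (0:ℝ), s < 1 := eventually_lt_nhds (by norm_num)
    filter_upwards [hlt.filter_mono nhdsWithin_le_nhds,
      self_mem_nhdsWithin] with s h1 h2
    exact ⟨le_of_lt h2, h1⟩
  filter_upwards [hev1, hev2] with s hs1 hs2
  rw [dist_eq_norm]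
  have key : S s F - S 0 F
      = S s (F - f) + S s (f - (evo ρ (M s) (N s) D Al) ⟨u, hxd⟩) + (u - S 0 F) := by
    rw [map_sub, map_sub, hSsTu s hs2]
    abel
  have b1 : ‖S s (F - f)‖ < ε / 4 := by
    calc ‖S s (F - f)‖ ≤ c⁻¹ * ‖F - f‖ := hbound s hs2 _
      _ < c⁻¹ * (c * ε / 4) := by
          apply mul_lt_mul_of_pos_left hx (inv_pos.mpr hc)
      _ = ε / 4 := by field_simp
  have b2 : ‖S s (f - (evo ρ (M s) (N s) D Al) ⟨u, hxd⟩)‖ < ε / 4 := by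
    calc ‖S s (f - (evo ρ (M s) (N s) D Al) ⟨u, hxd⟩)‖ ≤ c⁻¹ * ‖f - (evo ρ (M s) (N s) D Al) ⟨u, hxd⟩‖ := hbound s hs2 _
      _ < c⁻¹ * (c * ε / 4) := by
          apply mul_lt_mul_of_pos_left ?_ (inv_pos.mpr hc)
          rwa [norm_sub_rev]
      _ = ε / 4 := by field_simp
  have b3 : ‖u - S 0 F‖ < ε / 4 := by
    have : u - S 0 F = S 0 (f - F) := by rw [map_sub, hS0f]
    rw [this]
    calc ‖S 0 (f - F)‖ ≤ c⁻¹ * ‖f - F‖ := hbound 0 h01 _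
      _ < c⁻¹ * (c * ε / 4) := by
          apply mul_lt_mul_of_pos_left ?_ (inv_pos.mpr hc)
          rwa [norm_sub_rev]
      _ = ε / 4 := by field_simp
  calc ‖S s F - S 0 F‖ ≤ ‖S s (F - f)‖ + ‖S s (f - (evo ρ (M s) (N s) D Al) ⟨u, hxd⟩)‖ + ‖u - S 0 F‖ := by
        rw [key]; exact norm_add₃_le
    _ < ε / 4 + ε / 4 + ε / 4 := by linarith
    _ < ε := by linarith

end AuxProofs

theorem evo_solution_operators_converge_on_smooth
    (H : Type*) [NormedAddCommGroup H] [InnerProductSpace ℂ H] [CompleteSpace H]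
    (ρ c : ℝ) (hρ : 0 < ρ) (hc : 0 < c)
    (A : H →ₗ.[ℂ] H) (hA : IsSkewSelfAdjointP A)
    (M N : ℝ → H →L[ℂ] H) (hMsa : ∀ s ∈ Set.Ico (0 : ℝ) 1, IsSelfAdjoint (M s))
    (hpos : ∀ s ∈ Set.Ico (0 : ℝ) 1, ∀ x : H,
      c * ‖x‖ ^ 2 ≤ (inner ℂ x (((ρ : ℂ) • M s + reOp (N s)) x) : ℂ).re)
    (hMconv : ∀ x : H, Filter.Tendsto (fun s => M s x) (nhdsWithin 0 (Set.Ioi 0)) (nhds (M 0 x)))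
    (hNconv : ∀ x : H, Filter.Tendsto (fun s => N s x) (nhdsWithin 0 (Set.Ioi 0)) (nhds (N 0 x)))
    (D Al : Hw H ρ →ₗ.[ℂ] Hw H ρ) (hD : IsTimeDeriv ρ D) (hAl : IsPointwiseLift ρ A Al)
    (S : ℝ → (Hw H ρ →L[ℂ] Hw H ρ))
    (hS : ∀ s ∈ Set.Ico (0 : ℝ) 1, IsInverseOf (S s) (evo ρ (M s) (N s) D Al).closure) :
    ∀ F ∈ D.domain,
      Filter.Tendsto (fun s => S s F) (nhdsWithin 0 (Set.Ioi 0)) (nhds (S 0 F)) := by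
  intro F _
  exact evo_solution_operators_converge_on_smooth' c hρ hc A hA M N hMsa hpos
    hMconv hNconv D Al hD hAl S hS F
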